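/- Let T be a set, 𝒜 a collection of subsets of T containing ∅ and closed under countable intersections, and d a pseudometric on 𝒜 that is outer continuous and has the midpoint property. Let t ∈ T be such that the set A(t) := ⋂ {A ∈ 𝒜 : t ∈ A} belongs to 𝒜 and contains t. Then for every A ∈ 𝒜, qd(t, A) ≤ d(A(t), A). -/

import Mathlib

open scoped ENNReal

/-- The victiny of `A` of size `ρ` : the union of the symmetric differences `A △ A'` over
`A' ∈ 𝒜` with `d A A' < ρ`; it is empty for `ρ ≤ 0`. -/
def victiny {T : Type*} (𝒜 : Set (Set T)) (d : Set T → Set T → ℝ)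
    (A : Set T) (ρ : ℝ) : Set T :=
  {t | 0 < ρ ∧ ∃ A' ∈ 𝒜, d A A' < ρ ∧ t ∈ symmDiff A A'}

/-- The divergence `qd(t, A) := inf {ρ > 0 : t ∈ V(A, ρ)} ∈ [0, ∞]`,
with `inf ∅ = ∞`. -/
noncomputable def qd {T : Type*} (𝒜 : Set (Set T)) (d : Set T → Set T → ℝ)
    (t : T) (A : Set T) : ℝ≥0∞ :=
  sInf (ENNReal.ofReal '' {ρ : ℝ | 0 < ρ ∧ t ∈ victiny 𝒜 d A ρ})

/-- **The divergence is bounded by the distance to `A(t)`:**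
if `𝒜` contains `∅`, is closed under countable intersections and `d` is an outer
continuous pseudometric with the midpoint property, then for `t ∈ T` with
`A(t) := ⋂ {B ∈ 𝒜 : t ∈ B} ∈ 𝒜` and `t ∈ A(t)`, one has `qd(t, A) ≤ d(A(t), A)` for
every `A ∈ 𝒜`. -/
theorem stmt_9 {T : Type*} (𝒜 : Set (Set T)) (d : Set T → Set T → ℝ)
    (hempty : (∅ : Set T) ∈ 𝒜)
    (hcap : ∀ As : ℕ → Set T, (∀ n, As n ∈ 𝒜) → (⋂ n, As n) ∈ 𝒜)
    (hnn : ∀ A ∈ 𝒜, ∀ B ∈ 𝒜, 0 ≤ d A B)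
    (hsymm : ∀ A ∈ 𝒜, ∀ B ∈ 𝒜, d A B = d B A)
    (htri : ∀ A ∈ 𝒜, ∀ B ∈ 𝒜, ∀ C ∈ 𝒜, d A C ≤ d A B + d B C)
    (hrefl : ∀ A ∈ 𝒜, d A A = 0)
    (houter : ∀ As : ℕ → Set T, (∀ n, As n ∈ 𝒜) → (∀ n, As (n + 1) ⊆ As n) →
      (⋂ n, As n) ∈ 𝒜 →
      Filter.Tendsto (fun n => d (As n) (⋂ n, As n)) Filter.atTop (nhds 0))
    (hmid : ∀ A ∈ 𝒜, ∀ A' ∈ 𝒜, A ⊆ A' → ∃ A'' ∈ 𝒜, A ⊆ A'' ∧ A'' ⊆ A' ∧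
      d A A'' = d A A' / 2 ∧ d A'' A' = d A A' / 2)
    (t : T)
    (hAt : (⋂₀ {B : Set T | B ∈ 𝒜 ∧ t ∈ B}) ∈ 𝒜)
    (htAt : t ∈ ⋂₀ {B : Set T | B ∈ 𝒜 ∧ t ∈ B})
    (A : Set T) (hA : A ∈ 𝒜) :
    qd 𝒜 d t A ≤ ENNReal.ofReal (d (⋂₀ {B : Set T | B ∈ 𝒜 ∧ t ∈ B}) A) := by
  set At := ⋂₀ {B : Set T | B ∈ 𝒜 ∧ t ∈ B} with hAtdef
  set c := d ∅ At with hc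
  have hc0 : 0 ≤ c := hnn ∅ hempty At hAt
  -- key approximation lemma: sets not containing t arbitrarily close to At
  have key : ∀ n : ℕ, ∃ B ∈ 𝒜, t ∉ B ∧ B ⊆ At ∧ d B At ≤ c / 2 ^ n := by
    intro n
    induction n with
    | zero => exact ⟨∅, hempty, fun h => h, Set.empty_subset _, by simp [hc]⟩
    | succ n ih =>
      obtain ⟨B, hB, htB, hBAt, hd⟩ := ih
      obtain ⟨M, hM, hBM, hMAt, hdBM, hdMAt⟩ := hmid B hB At hAt hBAt
      by_cases htM : t ∈ M
      · -- then M = At, so d B At = d B At / 2, hence d B At = 0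
        have hAtM : At ⊆ M := Set.sInter_subset_of_mem ⟨hM, htM⟩
        have hMeq : M = At := Set.Subset.antisymm hMAt hAtM
        rw [hMeq] at hdBM
        have h0 : d B At = 0 := by linarith
        refine ⟨B, hB, htB, hBAt, ?_⟩
        rw [h0]
        positivity
      · refine ⟨M, hM, htM, hMAt, ?_⟩
        rw [hdMAt, pow_succ]
        have h2 : (0:ℝ) < 2 ^ n := by positivity
        rw [div_le_div_iff₀ (by norm_num) (by positivity)]
        rw [le_div_iff₀ h2] at hd
        nlinarith
  have hδ0 : 0 ≤ d At A := hnn At hAt A hA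
  -- main bound: for every ε > 0, qd ≤ ofReal (d At A + ε)
  have main : ∀ ε : ℝ, 0 < ε → qd 𝒜 d t A ≤ ENNReal.ofReal (d At A + ε) := by
    intro ε hε
    have hρpos : 0 < d At A + ε := by linarith
    -- find a suitable A'
    have : ∃ A' ∈ 𝒜, d A A' < d At A + ε ∧ t ∈ symmDiff A A' := by
      by_cases htA : t ∈ A
      · -- use the key lemma
        obtain ⟨n, hn⟩ : ∃ n : ℕ, (1/2 : ℝ) ^ n < ε / (c + 1) :=
          exists_pow_lt_of_lt_one (by positivity) (by norm_num)
        obtain ⟨B, hB, htB, hBAt, hd⟩ := key n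
        have hcn : c / 2 ^ n < ε := by
          have h1 : c / 2 ^ n = c * (1/2) ^ n := by
            rw [one_div, inv_pow, div_eq_mul_inv]
          have h2 : (0:ℝ) ≤ (1/2:ℝ) ^ n := by positivity
          have h3 : c * (1/2:ℝ) ^ n ≤ (c + 1) * ((1/2:ℝ) ^ n) := by nlinarith
          have h4 : (c + 1) * ((1/2:ℝ) ^ n) < (c + 1) * (ε / (c + 1)) := by
            apply mul_lt_mul_of_pos_left hn (by linarith)
          have h5 : (c + 1) * (ε / (c + 1)) = ε := by field_simp
          linarith [h1 ▸ (h3.trans_lt (h4.trans_eq h5))]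
        refine ⟨B, hB, ?_, ?_⟩
        · have htri' := htri A hA At hAt B hB
          have hsy : d At B = d B At := hsymm At hAt B hB
          have hsy2 : d A At = d At A := hsymm A hA At hAt
          have := hd.trans_lt hcn
          linarith
        · rw [Set.mem_symmDiff]
          exact Or.inl ⟨htA, htB⟩
      · refine ⟨At, hAt, ?_, ?_⟩
        · have hsy : d A At = d At A := hsymm A hA At hAt
          linarith
        · rw [Set.mem_symmDiff]
          exact Or.inr ⟨htAt, htA⟩
    obtain ⟨A', hA', hdA', htA'⟩ := this
    apply sInf_le
    exact ⟨d At A + ε, ⟨hρpos, hρpos, A', hA', hdA', htA'⟩, rfl⟩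
  -- conclude
  apply ENNReal.le_of_forall_pos_le_add
  intro ε hε _
  calc qd 𝒜 d t A ≤ ENNReal.ofReal (d At A + ε) := main ε (by exact_mod_cast hε)
    _ = ENNReal.ofReal (d At A) + ENNReal.ofReal ε := ENNReal.ofReal_add hδ0 ε.coe_nonneg
    _ = ENNReal.ofReal (d At A) + ε := by rw [ENNReal.ofReal_coe_nnreal]
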